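/- Let p and q be coprime positive integers with p odd, 0 < p < q, and q divisible by 4. Then the integer sum S = Σ_{j=1}^{(q-2)/2} (-1)^{⌊2jp/q⌋} is odd. (In the paper this sum equals minus the linking number lk(K_i, λ_i) of equation (1), and its oddness shows λ_i is never the preferred longitude of the 2-bridge link L_{p/q} when 4 divides q.) -/

import Mathlib

private lemma aux_unit (u : ℤˣ) : ((u : ℤ) : ZMod 2) = 1 := by
  rcases Int.units_eq_one_or u with h | h <;> rw [h] <;> decide


/-- For coprime positive integers `p`, `q` with `p` odd, `0 < p < q`, and `4 ∣ q`,
the sum `S = ∑_{j=1}^{(q-2)/2} (-1)^⌊2jp/q⌋` is odd. -/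
theorem stmt_0 (p q : ℕ) (hp : 0 < p) (hlt : p < q) (hcop : Nat.Coprime p q)
    (hodd : Odd p) (h4 : 4 ∣ q) :
    Odd (∑ j ∈ Finset.Icc 1 ((q - 2) / 2),
      ((Int.negOnePow ⌊(2 * j * p : ℚ) / (q : ℚ)⌋ : ℤˣ) : ℤ)) := by
  obtain ⟨k, rfl⟩ := h4
  have hk : 0 < k := by omega
  rw [Int.not_even_iff_odd.symm, even_iff_two_dvd, show (2:ℤ) = ((2:ℕ):ℤ) by norm_num,
    ← ZMod.intCast_zmod_eq_zero_iff_dvd]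
  push_cast
  rw [Finset.sum_congr rfl (fun j _ => ?_), Finset.sum_const, Nat.card_Icc]
  · have h1 : (4 * k - 2) / 2 + 1 - 1 = 2 * k - 1 := by omega
    rw [h1, nsmul_eq_mul, mul_one]
    intro h
    rw [ZMod.natCast_eq_zero_iff] at h
    omega
  · exact aux_unit _
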